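/- If p* is a global optimal solution of minimizing Q over Ω, and ω* is the set of indices i where p*_i ∈ {p⁰_i, p⁰_i + δ_i, p⁰_i - δ_i}, with complement ω̄*, then p*_{ω̄*} = S_{ω̄*,ω̄*}^{-1}(a_{ω̄*} + D_{•,ω̄*}ᵀ c - S_{ω̄*,ω*} p*_{ω*}). -/

import Mathlib

open Matrix Finset

theorem partial_optimality {n k : ℕ}
    (D : Matrix (Fin n) (Fin n) ℝ) (a c p0 δ : Fin n → ℝ) (hδ : ∀ i, 0 ≤ δ i)
    (S : Matrix (Fin n) (Fin n) ℝ) (hS : S = D + Dᵀ) (hPD : S.PosDef)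
    (Q : (Fin n → ℝ) → ℝ)
    (hQ : ∀ p, Q p = (1/2) * (p ⬝ᵥ S.mulVec p) - (a + Dᵀ.mulVec c) ⬝ᵥ p)
    (Ω : Set (Fin n → ℝ))
    (hΩ : Ω = {p | {i | p i ≠ p0 i}.ncard ≤ k ∧
      ∀ i, p i = p0 i ∨ p0 i + δ i ≤ p i ∨ p i ≤ p0 i - δ i})
    (pstar : Fin n → ℝ) (hfeas : pstar ∈ Ω)
    (hopt : ∀ p ∈ Ω, Q pstar ≤ Q p)
    (ω : Finset (Fin n))
    (hω : ∀ i, i ∈ ω ↔ (pstar i = p0 i ∨ pstar i = p0 i + δ i ∨ pstar i = p0 i - δ i)) :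
    ∀ i : {i : Fin n // i ∈ ωᶜ},
      pstar (i : Fin n) =
        (S.submatrix (Subtype.val : {i : Fin n // i ∈ ωᶜ} → Fin n) Subtype.val)⁻¹.mulVec
          (fun j : {i : Fin n // i ∈ ωᶜ} =>
            a (j : Fin n) + Dᵀ.mulVec c (j : Fin n) - ∑ l ∈ ω, S (j : Fin n) l * pstar l) i := by
  have hSsymm : ∀ i j, S i j = S j i := by
    intro i j
    simp [hS, Matrix.add_apply, Matrix.transpose_apply, add_comm]
  have hST : Sᵀ = S := by
    ext i j
    exact hSsymm j i
  rw [hΩ] at hfeas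
  obtain ⟨hcard, hcons⟩ := hfeas
  -- Step 1: first-order conditions at the free indices
  have step1 : ∀ i : Fin n, i ∉ ω → S.mulVec pstar i = a i + Dᵀ.mulVec c i := by
    intro i hi
    rw [hω] at hi
    push_neg at hi
    obtain ⟨h1, h2, h3⟩ := hi
    set u : Fin n → ℝ := Pi.single i 1 with hudef
    have hstrict : p0 i + δ i < pstar i ∨ pstar i < p0 i - δ i := by
      rcases hcons i with h | h | h
      · exact absurd h h1
      · exact Or.inl (lt_of_le_of_ne h (Ne.symm h2))
      · exact Or.inr (lt_of_le_of_ne h h3)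
    have happ : ∀ (t : ℝ) (j : Fin n), (pstar + t • u) j =
        if j = i then pstar i + t else pstar j := by
      intro t j
      by_cases hji : j = i
      · subst hji; simp [hudef, Pi.single_apply]
      · simp [hudef, Pi.single_apply, hji]
    -- choose ε > 0 so that perturbations of size < ε stay feasible
    obtain ⟨ε, hε, hεfeas⟩ :
        ∃ ε > 0, ∀ t : ℝ, |t| < ε →
          (pstar + t • u) ∈
            {p : Fin n → ℝ | {j | p j ≠ p0 j}.ncard ≤ k ∧
              ∀ j, p j = p0 j ∨ p0 j + δ j ≤ p j ∨ p j ≤ p0 j - δ j} := by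
      have key : ∀ t : ℝ, pstar i + t ≠ p0 i →
          (p0 i + δ i ≤ pstar i + t ∨ pstar i + t ≤ p0 i - δ i) →
          (pstar + t • u) ∈
            {p : Fin n → ℝ | {j | p j ≠ p0 j}.ncard ≤ k ∧
              ∀ j, p j = p0 j ∨ p0 j + δ j ≤ p j ∨ p j ≤ p0 j - δ j} := by
        intro t hne hcon
        constructor
        · have hset : {j | (pstar + t • u) j ≠ p0 j} = {j | pstar j ≠ p0 j} := by
            ext j
            by_cases hji : j = i
            · subst hji
              simp only [Set.mem_setOf_eq, happ, if_pos rfl]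
              exact ⟨fun _ => h1, fun _ => hne⟩
            · simp only [Set.mem_setOf_eq, happ, if_neg hji]
          rw [hset]; exact hcard
        · intro j
          by_cases hji : j = i
          · subst hji
            rw [happ, if_pos rfl]
            rcases hcon with h | h
            · exact Or.inr (Or.inl h)
            · exact Or.inr (Or.inr h)
          · rw [happ, if_neg hji]
            exact hcons j
      rcases hstrict with h | h
      · refine ⟨pstar i - (p0 i + δ i), by linarith, fun t ht => ?_⟩
        have hab := abs_lt.1 ht
        have h1' : p0 i + δ i < pstar i + t := by linarith [hab.1]
        refine key t ?_ (Or.inl h1'.le)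
        have := hδ i
        intro hcontra; rw [hcontra] at h1'; linarith
      · refine ⟨(p0 i - δ i) - pstar i, by linarith, fun t ht => ?_⟩
        have hab := abs_lt.1 ht
        have h1' : pstar i + t < p0 i - δ i := by linarith [hab.2]
        refine key t ?_ (Or.inr h1'.le)
        have := hδ i
        intro hcontra; rw [hcontra] at h1'; linarith
    -- quadratic expansion of Q along the perturbation direction
    set g : ℝ := S.mulVec pstar i - (a i + Dᵀ.mulVec c i) with hg
    have hune : u ≠ 0 := by
      intro h
      have := congrFun h i
      simp [hudef, Pi.single_apply] at this
    have hSii : 0 < S i i := by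
      have h := hPD.dotProduct_mulVec_pos hune
      have : star u ⬝ᵥ S.mulVec u = S i i := by
        simp [hudef, Matrix.mulVec_single, single_dotProduct]
      rwa [this] at h
    have hvm : ∀ v : Fin n → ℝ, v ⬝ᵥ S.mulVec u = S.mulVec v i := by
      intro v
      rw [Matrix.dotProduct_mulVec]
      have : S.vecMul v = S.mulVec v := by
        rw [← hST, Matrix.vecMul_transpose, hST]
      rw [this, dotProduct_single, mul_one]
    have hexp : ∀ t : ℝ, Q (pstar + t • u) - Q pstar
        = t * g + (1/2) * t^2 * S i i := by
      intro t
      have e1 : (pstar + t • u) ⬝ᵥ S.mulVec (pstar + t • u)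
          = pstar ⬝ᵥ S.mulVec pstar + 2 * t * S.mulVec pstar i + t^2 * S i i := by
        rw [Matrix.mulVec_add, Matrix.mulVec_smul, dotProduct_add, add_dotProduct,
          add_dotProduct, dotProduct_smul, smul_dotProduct, smul_dotProduct, dotProduct_smul]
        have e11 : pstar ⬝ᵥ S.mulVec u = S.mulVec pstar i := hvm pstar
        have e12 : u ⬝ᵥ S.mulVec pstar = S.mulVec pstar i := by
          rw [hudef, single_dotProduct, one_mul]
        have e13 : u ⬝ᵥ S.mulVec u = S i i := by
          rw [hvm u, hudef]
          simp [Matrix.mulVec_single]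
        rw [e11, e12, e13]
        simp only [smul_eq_mul]
        ring
      have e2 : (a + Dᵀ.mulVec c) ⬝ᵥ (pstar + t • u)
          = (a + Dᵀ.mulVec c) ⬝ᵥ pstar + t * (a i + Dᵀ.mulVec c i) := by
        rw [dotProduct_add, dotProduct_smul]
        have : (a + Dᵀ.mulVec c) ⬝ᵥ u = a i + Dᵀ.mulVec c i := by
          rw [hudef, dotProduct_single, mul_one]
          simp
        rw [this]
        simp [smul_eq_mul]
      rw [hQ, hQ, e1, e2, hg]
      ring
    -- g must vanish
    have hg0 : g = 0 := by
      by_contra hgne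
      have hQineq : ∀ t : ℝ, |t| < ε → 0 ≤ t * g + (1/2) * t^2 * S i i := by
        intro t ht
        have hle := hopt (pstar + t • u) (by rw [hΩ]; exact hεfeas t ht)
        have hx := hexp t
        linarith
      rcases lt_or_gt_of_ne hgne with hneg | hpos
      · set m : ℝ := min (ε/2) (-g / S i i) with hm
        have hm0 : 0 < m := lt_min (by linarith) (div_pos (by linarith) hSii)
        have hmε : |(-m)| < ε := by
          rw [abs_neg, abs_of_pos hm0]
          calc m ≤ ε/2 := min_le_left _ _
          _ < ε := by linarith
        have hmg : m * S i i ≤ -g := by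
          have hle := min_le_right (ε/2) (-g / S i i)
          calc m * S i i ≤ (-g / S i i) * S i i :=
                mul_le_mul_of_nonneg_right hle hSii.le
          _ = -g := by field_simp
        have := hQineq m (by rwa [abs_neg] at hmε)
        nlinarith [mul_pos hm0 hm0]
      · set m : ℝ := min (ε/2) (g / S i i) with hm
        have hm0 : 0 < m := lt_min (by linarith) (div_pos hpos hSii)
        have hmε : |m| < ε := by
          rw [abs_of_pos hm0]
          calc m ≤ ε/2 := min_le_left _ _
          _ < ε := by linarith
        have hmg : m * S i i ≤ g := by
          have hle := min_le_right (ε/2) (g / S i i)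
          calc m * S i i ≤ (g / S i i) * S i i :=
                mul_le_mul_of_nonneg_right hle hSii.le
          _ = g := by field_simp
        have := hQineq (-m) (by rwa [abs_neg])
        nlinarith [mul_pos hm0 hm0]
    have : S.mulVec pstar i - (a i + Dᵀ.mulVec c i) = 0 := hg0
    linarith
  -- Step 2: linear system on the free block
  set A := S.submatrix (Subtype.val : {i : Fin n // i ∈ ωᶜ} → Fin n) Subtype.val with hA
  set bv : {i : Fin n // i ∈ ωᶜ} → ℝ := fun j =>
    a (j : Fin n) + Dᵀ.mulVec c (j : Fin n) - ∑ l ∈ ω, S (j : Fin n) l * pstar l with hbv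
  set x : {i : Fin n // i ∈ ωᶜ} → ℝ := fun j => pstar (j : Fin n) with hx
  have hAx : A.mulVec x = bv := by
    funext j
    have hjω : (j : Fin n) ∉ ω := Finset.mem_compl.mp j.2
    have hsplit : ∑ l ∈ ω, S (j : Fin n) l * pstar l + ∑ l ∈ ωᶜ, S (j : Fin n) l * pstar l
        = S.mulVec pstar (j : Fin n) := by
      rw [Finset.sum_add_sum_compl]
      simp [Matrix.mulVec, dotProduct]
    have hsum : A.mulVec x j = ∑ l ∈ ωᶜ, S (j : Fin n) l * pstar l := by
      simp only [Matrix.mulVec, dotProduct, hA, Matrix.submatrix_apply, hx]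
      rw [← Finset.sum_coe_sort (ωᶜ) (fun l => S (j : Fin n) l * pstar l)]
    rw [hsum, hbv]
    have h1 := step1 (j : Fin n) hjω
    simp only
    linarith [hsplit, h1]
  -- Step 3: A is positive definite, hence invertible
  have hApd : A.PosDef := by
    refine Matrix.PosDef.of_dotProduct_mulVec_pos ?_ ?_
    · ext j l
      simp only [Matrix.conjTranspose_apply, hA, Matrix.submatrix_apply, star_trivial]
      exact hSsymm _ _
    · intro y hy
      set z : Fin n → ℝ := fun j => if h : j ∈ ωᶜ then y ⟨j, h⟩ else 0 with hz
      have hzc : ∀ j : {i : Fin n // i ∈ ωᶜ}, z (j : Fin n) = y j := by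
        intro j
        exact dif_pos j.2
      have hzω : ∀ j ∈ ω, z j = 0 := by
        intro j hj
        have hnc : j ∉ ωᶜ := fun hc => (Finset.mem_compl.mp hc) hj
        exact dif_neg hnc
      have hzne : z ≠ 0 := by
        intro hcontra
        apply hy
        funext j
        have := congrFun hcontra (j : Fin n)
        rw [hzc j] at this
        exact this
      have hpos := hPD.dotProduct_mulVec_pos hzne
      have heq : star y ⬝ᵥ A.mulVec y = star z ⬝ᵥ S.mulVec z := by
        simp only [dotProduct, Matrix.mulVec, star_trivial, Pi.star_apply]
        rw [← Finset.sum_add_sum_compl ω (fun j => z j * ∑ l, S j l * z l)]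
        have hzero : ∑ j ∈ ω, z j * ∑ l, S j l * z l = 0 :=
          Finset.sum_eq_zero fun j hj => by rw [hzω j hj, zero_mul]
        rw [hzero, zero_add, ← Finset.sum_coe_sort (ωᶜ)]
        apply Finset.sum_congr rfl
        intro j _
        rw [hzc j]
        congr 1
        rw [← Finset.sum_add_sum_compl ω (fun l => S (j : Fin n) l * z l)]
        have hzero2 : ∑ l ∈ ω, S (j : Fin n) l * z l = 0 :=
          Finset.sum_eq_zero fun l hl => by rw [hzω l hl, mul_zero]
        rw [hzero2, zero_add, ← Finset.sum_coe_sort (ωᶜ)]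
        apply Finset.sum_congr rfl
        intro l _
        rw [hA, Matrix.submatrix_apply, hzc l]
      rw [heq]
      exact hpos
  have hunit : IsUnit A.det := hApd.det_pos.ne'.isUnit
  have hfinal : A⁻¹.mulVec bv = x := by
    rw [← hAx, Matrix.mulVec_mulVec, Matrix.nonsing_inv_mul A hunit, Matrix.one_mulVec]
  intro i
  have := congrFun hfinal i
  rw [this]
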